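/- Let C₁ = C(c₁,r₁), C₂ = C(c₂,r₂) and D₁ = C(d₁,ρ₁), D₂ = C(d₂,ρ₂) be circles in the Euclidean plane with all radii positive, (c₁,r₁) ≠ (c₂,r₂) and (d₁,ρ₁) ≠ (d₂,ρ₂). Suppose the set T of lines tangent to both C₁ and C₂ has exactly 4 elements and coincides with the set of lines tangent to both D₁ and D₂. Then the unordered pair {(c₁,r₁),(c₂,r₂)} equals the unordered pair {(d₁,ρ₁),(d₂,ρ₂)}; that is, four distinct common tangents determine the two circles. -/

import Mathlib

noncomputable section

/-- The Euclidean plane. -/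
abbrev E2 : Type := EuclideanSpace ℝ (Fin 2)

/-- A line in `ℝ²`: a 1-dimensional affine subspace. -/
def IsLine (L : AffineSubspace ℝ E2) : Prop := Module.finrank ℝ L.direction = 1

/-- A line is tangent to the circle with centre `c` and radius `r` if the distance
from `c` to the line equals `r`. -/
def Tangent (c : E2) (r : ℝ) (L : AffineSubspace ℝ E2) : Prop :=
  Metric.infDist c (L : Set E2) = r

open scoped RealInnerProductSpace

namespace FourTangents

/-- Rotation of a plane vector by 90 degrees. -/
noncomputable def perp (w : E2) : E2 := (WithLp.equiv 2 _).symm ![-w 1, w 0]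

lemma inner_E2 (x y : E2) : ⟪x, y⟫ = x 0 * y 0 + x 1 * y 1 := by
  simp [PiLp.inner_apply, Fin.sum_univ_two, RCLike.inner_apply, mul_comm]

lemma ne_zero_coord {d : E2} (h : d ≠ 0) : d 0 ≠ 0 ∨ d 1 ≠ 0 := by
  by_contra hc; push_neg at hc; exact h (by ext i; fin_cases i <;> simp [hc.1, hc.2])

lemma normsq_pos {w : E2} (hw : w ≠ 0) : 0 < w 0 * w 0 + w 1 * w 1 := by
  rcases ne_zero_coord hw with h | h <;>
    nlinarith [mul_self_nonneg (w 0), mul_self_nonneg (w 1), mul_self_pos.2 h]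

/-- If `d ⊥ w` and `d ⊥ s` with `d ≠ 0` (in the plane), then `s ⊥ perp w`. -/
lemma perp_lemma {d s w : E2} (h1 : ⟪d, w⟫ = 0) (h2 : ⟪d, s⟫ = 0) (hd : d ≠ 0) :
    ⟪s, perp w⟫ = 0 := by
  rw [inner_E2] at *
  rw [show perp w 0 = -w 1 from rfl, show perp w 1 = w 0 from rfl]
  rcases ne_zero_coord hd with h | h
  · have : d 0 * (s 0 * -w 1 + s 1 * w 0) = 0 := by linear_combination s 1 * h1 - w 1 * h2
    rcases mul_eq_zero.1 this with h' | h'; exact absurd h' h; exact h'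
  · have : d 1 * (s 0 * -w 1 + s 1 * w 0) = 0 := by linear_combination (-(s 0)) * h1 + w 0 * h2
    rcases mul_eq_zero.1 this with h' | h'; exact absurd h' h; exact h'

lemma span_lemma {z w : E2} (h1 : ⟪z, w⟫ = 0) (h2 : ⟪z, perp w⟫ = 0) (hw : w ≠ 0) : z = 0 := by
  rw [inner_E2] at *
  rw [show perp w 0 = -w 1 from rfl, show perp w 1 = w 0 from rfl] at h2
  have hw2 := normsq_pos hw
  ext i; fin_cases i <;> simp
  · have : z 0 * (w 0 * w 0 + w 1 * w 1) = 0 := by linear_combination w 0 * h1 - w 1 * h2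
    rcases mul_eq_zero.1 this with h' | h'; exact h'; exact absurd h' hw2.ne'
  · have : z 1 * (w 0 * w 0 + w 1 * w 1) = 0 := by linear_combination w 1 * h1 + w 0 * h2
    rcases mul_eq_zero.1 this with h' | h'; exact h'; exact absurd h' hw2.ne'

lemma parallel_lemma {v w : E2} (h : ⟪v, perp w⟫ = 0) (hw : w ≠ 0) : ∃ c : ℝ, v = c • w := by
  rw [inner_E2] at h
  rw [show perp w 0 = -w 1 from rfl, show perp w 1 = w 0 from rfl] at h
  have hw2 := (normsq_pos hw).ne'
  refine ⟨(v 0 * w 0 + v 1 * w 1) / (w 0 * w 0 + w 1 * w 1), ?_⟩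
  ext i; fin_cases i <;> simp <;> field_simp [show w 0 ^ 2 + w 1 ^ 2 ≠ 0 by rw [sq, sq]; exact hw2] <;>
    first | linear_combination (-(w 1)) * h | linear_combination (w 0) * h

lemma perp_perp (w : E2) : perp (perp w) = -w := by ext i; fin_cases i <;> simp [perp]

lemma inner_perp_comm (v w : E2) : ⟪v, perp w⟫ = -⟪perp v, w⟫ := by
  rw [inner_E2, inner_E2, show perp w 0 = -w 1 from rfl, show perp w 1 = w 0 from rfl,
    show perp v 0 = -v 1 from rfl, show perp v 1 = v 0 from rfl]; ring

/-- Two distinct unit vectors with the same inner product against `w ≠ 0` have opposite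
(and in particular distinct) inner products against `perp w`. -/
lemma pairH {w u u' : E2} (hw : w ≠ 0) (huu' : u ≠ u') (hu : ‖u‖ = 1) (hu' : ‖u'‖ = 1)
    (hf : ⟪u, w⟫ = ⟪u', w⟫) :
    ⟪u, perp w⟫ + ⟪u', perp w⟫ = 0 ∧ ⟪u, perp w⟫ ≠ ⟪u', perp w⟫ := by
  have hd : u - u' ≠ 0 := sub_ne_zero.2 huu'
  have h1 : ⟪u - u', w⟫ = 0 := by rw [inner_sub_left, hf, sub_self]
  constructor
  · have h2 : ⟪u - u', u + u'⟫ = 0 := by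
      rw [inner_sub_left, inner_add_right, inner_add_right,
        real_inner_self_eq_norm_mul_norm, real_inner_self_eq_norm_mul_norm, hu, hu',
        real_inner_comm u' u]
      ring
    have := perp_lemma h1 h2 hd
    rwa [inner_add_left] at this
  · intro hg
    apply hd
    refine span_lemma h1 ?_ hw
    rw [inner_sub_left, hg, sub_self]

lemma comb {p q f1 f2 f3 f4 g1 g2 g3 g4 : ℝ} (hpq : p ≠ q)
    (h1 : f1 = p ∨ f1 = q) (h2 : f2 = p ∨ f2 = q) (h3 : f3 = p ∨ f3 = q) (h4 : f4 = p ∨ f4 = q)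
    (H12 : f1 = f2 → g1 + g2 = 0 ∧ g1 ≠ g2) (H13 : f1 = f3 → g1 + g3 = 0 ∧ g1 ≠ g3)
    (H14 : f1 = f4 → g1 + g4 = 0 ∧ g1 ≠ g4) (H23 : f2 = f3 → g2 + g3 = 0 ∧ g2 ≠ g3)
    (H24 : f2 = f4 → g2 + g4 = 0 ∧ g2 ≠ g4) (H34 : f3 = f4 → g3 + g4 = 0 ∧ g3 ≠ g4) :
    f1 + f2 + f3 + f4 = 2 * (p + q) ∧ g1 + g2 + g3 + g4 = 0 := by
  rcases h1 with rfl | rfl <;> rcases h2 with h2 | h2 <;> rcases h3 with h3 | h3 <;>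
    rcases h4 with h4 | h4 <;> subst h2 <;> subst h3 <;> subst h4 <;>
    first
    | exact ((H23 rfl).2 (by linarith [(H12 rfl).1, (H13 rfl).1, (H23 rfl).1])).elim
    | exact ((H24 rfl).2 (by linarith [(H12 rfl).1, (H14 rfl).1, (H24 rfl).1])).elim
    | exact ((H34 rfl).2 (by linarith [(H13 rfl).1, (H14 rfl).1, (H34 rfl).1])).elim
    | exact ((H34 rfl).2 (by linarith [(H23 rfl).1, (H24 rfl).1, (H34 rfl).1])).elim
    | exact ⟨by linarith, by linarith [(H12 rfl).1, (H34 rfl).1]⟩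
    | exact ⟨by linarith, by linarith [(H13 rfl).1, (H24 rfl).1]⟩
    | exact ⟨by linarith, by linarith [(H14 rfl).1, (H23 rfl).1]⟩

lemma infDist_line {u : E2} (hu : ‖u‖ = 1) (t : ℝ) (c : E2)
    (S : Set E2) (hS : S = {x : E2 | ⟪u, x⟫ = t}) :
    Metric.infDist c S = |⟪u, c⟫ - t| := by
  subst hS
  have hy : c - (⟪u, c⟫ - t) • u ∈ {x : E2 | ⟪u, x⟫ = t} := by
    show ⟪u, _⟫ = t
    rw [inner_sub_right, real_inner_smul_right, real_inner_self_eq_norm_mul_norm, hu]; ring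
  have hlow : ∀ z ∈ {x : E2 | ⟪u, x⟫ = t}, |⟪u, c⟫ - t| ≤ dist c z := by
    intro z hz
    have h1 : |⟪u, c - z⟫| ≤ ‖u‖ * ‖c - z‖ := abs_real_inner_le_norm u (c - z)
    rw [hu, one_mul] at h1
    calc |⟪u, c⟫ - t| = |⟪u, c - z⟫| := by rw [inner_sub_right, hz]
    _ ≤ ‖c - z‖ := h1
    _ = dist c z := (dist_eq_norm c z).symm
  apply le_antisymm
  · calc Metric.infDist c _ ≤ dist c (c - (⟪u, c⟫ - t) • u) := Metric.infDist_le_dist_of_mem hy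
    _ = |⟪u, c⟫ - t| := by rw [dist_eq_norm]; simp [norm_smul, hu]
  · by_contra hcon
    push_neg at hcon
    obtain ⟨z, hz, hlt⟩ := (Metric.infDist_lt_iff ⟨_, hy⟩).1 hcon
    exact absurd hlt (not_lt.2 (hlow z hz))

lemma line_rep {L : AffineSubspace ℝ E2} (hL : IsLine L) :
    ∃ (u : E2) (t : ℝ), ‖u‖ = 1 ∧ ∀ x, x ∈ L ↔ ⟪u, x⟫ = t := by
  have hne : (L : Set E2).Nonempty := by
    by_contra h
    rw [Set.not_nonempty_iff_eq_empty] at h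
    have hbot : L = ⊥ := by ext x; simp [← SetLike.mem_coe, h]
    rw [IsLine, hbot, AffineSubspace.direction_bot] at hL
    simp at hL
  obtain ⟨p, hp⟩ := hne
  have h2 : Module.finrank ℝ E2 = 2 := by simp [finrank_euclideanSpace]
  have hsum := Submodule.finrank_add_finrank_orthogonal (K := L.direction)
  have hL' : Module.finrank ℝ L.direction = 1 := hL
  have hdim : Module.finrank ℝ (L.direction)ᗮ = 1 := by omega
  have hnebot : (L.direction)ᗮ ≠ ⊥ := by
    intro hb; rw [hb, finrank_bot] at hdim; omega
  obtain ⟨u₀, hu₀mem, hu₀ne⟩ := Submodule.ne_bot_iff _ |>.1 hnebot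
  have hle : L.direction ≤ (ℝ ∙ u₀)ᗮ := by
    intro d hd
    rw [Submodule.mem_orthogonal_singleton_iff_inner_right]
    rw [real_inner_comm]
    exact Submodule.inner_right_of_mem_orthogonal hd hu₀mem
  have hspan : Module.finrank ℝ (ℝ ∙ u₀) = 1 := finrank_span_singleton hu₀ne
  have hsum2 := Submodule.finrank_add_finrank_orthogonal (K := (ℝ ∙ u₀))
  have hdir : L.direction = (ℝ ∙ u₀)ᗮ :=
    Submodule.eq_of_le_of_finrank_eq hle (by omega)
  set u : E2 := ‖u₀‖⁻¹ • u₀ with hu_def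
  have hnorm : ‖u‖ = 1 := by
    rw [hu_def, norm_smul, norm_inv, norm_norm, inv_mul_cancel₀ (norm_ne_zero_iff.2 hu₀ne)]
  refine ⟨u, ⟪u, p⟫, hnorm, fun x => ?_⟩
  constructor
  · intro hx
    have hd : x -ᵥ p ∈ L.direction := AffineSubspace.vsub_mem_direction hx hp
    rw [hdir, Submodule.mem_orthogonal_singleton_iff_inner_right] at hd
    have hd' : ⟪u₀, x - p⟫ = 0 := hd
    have : ⟪u, x - p⟫ = 0 := by
      rw [hu_def, real_inner_smul_left, hd', mul_zero]
    rw [inner_sub_right] at this; linarith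
  · intro hx
    have h0 : ⟪u₀, x - p⟫ = 0 := by
      have : ⟪u, x - p⟫ = 0 := by rw [inner_sub_right, hx]; ring
      rw [hu_def, real_inner_smul_left] at this
      rcases mul_eq_zero.1 this with h | h
      · exact absurd (inv_eq_zero.1 h) (norm_ne_zero_iff.2 hu₀ne).elim
      · exact h
    have hd : x - p ∈ L.direction := by
      rw [hdir, Submodule.mem_orthogonal_singleton_iff_inner_right]; exact h0
    have := AffineSubspace.vadd_mem_of_mem_direction hd hp
    simpa [vadd_eq_add, sub_add_cancel] using this

lemma extract4 {α : Type*} {s : Set α} (hfin : s.Finite) (h : s.ncard = 4) :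
    ∃ a b c d : α, a ≠ b ∧ a ≠ c ∧ a ≠ d ∧ b ≠ c ∧ b ≠ d ∧ c ≠ d ∧ s = {a, b, c, d} := by
  obtain ⟨a, ha⟩ : s.Nonempty := Set.nonempty_of_ncard_ne_zero (by omega)
  have h3 : (s \ {a}).ncard = 3 := by
    have := Set.ncard_diff_singleton_add_one ha hfin
    omega
  obtain ⟨b, c, d, hbc, hbd, hcd, hset⟩ := Set.ncard_eq_three.1 h3
  have hb : b ∈ s \ {a} := by rw [hset]; simp
  have hc : c ∈ s \ {a} := by rw [hset]; simp
  have hd : d ∈ s \ {a} := by rw [hset]; simp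
  refine ⟨a, b, c, d, ?_, ?_, ?_, hbc, hbd, hcd, ?_⟩
  · exact fun h' => hb.2 (by simp [← h'])
  · exact fun h' => hc.2 (by simp [← h'])
  · exact fun h' => hd.2 (by simp [← h'])
  · ext x
    constructor
    · intro hx
      by_cases hxa : x = a
      · simp [hxa]
      · have : x ∈ s \ {a} := ⟨hx, hxa⟩
        rw [hset] at this
        simp at this ⊢; tauto
    · intro hx
      simp at hx
      rcases hx with rfl | rfl | rfl | rfl
      · exact ha
      · exact hb.1
      · exact hc.1
      · exact hd.1

/-- A tangent line to three circles admits a normalized equation. -/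
lemma rep_exists {L : AffineSubspace ℝ E2} (hL : IsLine L) {a b x : E2} {rA rB rX : ℝ}
    (hrA : 0 ≤ rA) (ha : Tangent a rA L) (hb : Tangent b rB L) (hx : Tangent x rX L) :
    ∃ (u : E2) (t : ℝ), ‖u‖ = 1 ∧ (∀ z, z ∈ L ↔ ⟪u, z⟫ = t) ∧ ⟪u, a⟫ - t = rA ∧
      (⟪u, b⟫ - t = rB ∨ ⟪u, b⟫ - t = -rB) ∧ (⟪u, x⟫ - t = rX ∨ ⟪u, x⟫ - t = -rX) := by
  obtain ⟨u, t, hu, hmem⟩ := line_rep hL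
  have hS : (L : Set E2) = {z : E2 | ⟪u, z⟫ = t} := Set.ext fun z => hmem z
  have hda : |⟪u, a⟫ - t| = rA := by rw [← infDist_line hu t a _ hS]; exact ha
  have hdb : |⟪u, b⟫ - t| = rB := by rw [← infDist_line hu t b _ hS]; exact hb
  have hdx : |⟪u, x⟫ - t| = rX := by rw [← infDist_line hu t x _ hS]; exact hx
  rcases (abs_eq hrA).1 hda with hA | hA
  · refine ⟨u, t, hu, hmem, hA, ?_, ?_⟩
    · rcases abs_eq (hdb ▸ abs_nonneg _) |>.1 hdb with h | h
      · exact Or.inl h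
      · exact Or.inr h
    · rcases abs_eq (hdx ▸ abs_nonneg _) |>.1 hdx with h | h
      · exact Or.inl h
      · exact Or.inr h
  · refine ⟨-u, -t, by simpa using hu, fun z => ?_, by rw [inner_neg_left]; linarith, ?_, ?_⟩
    · rw [hmem z, inner_neg_left, neg_inj]
    · rcases abs_eq (hdb ▸ abs_nonneg _) |>.1 hdb with h | h
      · exact Or.inr (by rw [inner_neg_left]; linarith)
      · exact Or.inl (by rw [inner_neg_left]; linarith)
    · rcases abs_eq (hdx ▸ abs_nonneg _) |>.1 hdx with h | h
      · exact Or.inr (by rw [inner_neg_left]; linarith)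
      · exact Or.inl (by rw [inner_neg_left]; linarith)

/-- Main lemma: a circle tangent to all four common tangents of two distinct circles
must be one of the two circles. -/
lemma main_lemma {a b x : E2} {rA rB rX : ℝ}
    (hrA : 0 < rA) (hrB : 0 < rB) (hrX : 0 < rX)
    (hab : (a, rA) ≠ (b, rB))
    (hfin : {L : AffineSubspace ℝ E2 | IsLine L ∧ Tangent a rA L ∧ Tangent b rB L}.Finite)
    (hcard : {L : AffineSubspace ℝ E2 | IsLine L ∧ Tangent a rA L ∧ Tangent b rB L}.ncard = 4)
    (htan : ∀ L ∈ {L : AffineSubspace ℝ E2 | IsLine L ∧ Tangent a rA L ∧ Tangent b rB L},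
      Tangent x rX L) :
    (x, rX) = (a, rA) ∨ (x, rX) = (b, rB) := by
  by_contra hcon
  push_neg at hcon
  obtain ⟨hxa, hxb⟩ := hcon
  obtain ⟨L1, L2, L3, L4, h12, h13, h14, h23, h24, h34, hTeq⟩ := extract4 hfin hcard
  have hmem : ∀ L ∈ ({L1, L2, L3, L4} : Set (AffineSubspace ℝ E2)),
      IsLine L ∧ Tangent a rA L ∧ Tangent b rB L ∧ Tangent x rX L := by
    intro L hL
    have hLT : L ∈ {L : AffineSubspace ℝ E2 | IsLine L ∧ Tangent a rA L ∧ Tangent b rB L} := by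
      rw [hTeq]; exact hL
    exact ⟨hLT.1, hLT.2.1, hLT.2.2, htan L hLT⟩
  obtain ⟨hl1, ha1, hb1, hx1⟩ := hmem L1 (by simp)
  obtain ⟨hl2, ha2, hb2, hx2⟩ := hmem L2 (by simp)
  obtain ⟨hl3, ha3, hb3, hx3⟩ := hmem L3 (by simp)
  obtain ⟨hl4, ha4, hb4, hx4⟩ := hmem L4 (by simp)
  obtain ⟨u1, t1, hu1, hm1, hA1, hB1, hX1⟩ := rep_exists hl1 hrA.le ha1 hb1 hx1
  obtain ⟨u2, t2, hu2, hm2, hA2, hB2, hX2⟩ := rep_exists hl2 hrA.le ha2 hb2 hx2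
  obtain ⟨u3, t3, hu3, hm3, hA3, hB3, hX3⟩ := rep_exists hl3 hrA.le ha3 hb3 hx3
  obtain ⟨u4, t4, hu4, hm4, hA4, hB4, hX4⟩ := rep_exists hl4 hrA.le ha4 hb4 hx4
  have key : ∀ (u u' : E2) (t t' : ℝ) (L L' : AffineSubspace ℝ E2),
      (∀ z, z ∈ L ↔ ⟪u, z⟫ = t) → (∀ z, z ∈ L' ↔ ⟪u', z⟫ = t') →
      ⟪u, a⟫ - t = rA → ⟪u', a⟫ - t' = rA → L ≠ L' → u ≠ u' := by
    intro u u' t t' L L' hm hm' hA hA' hLL' huu'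
    apply hLL'
    have ht : t = t' := by rw [huu'] at hA; linarith
    ext z
    rw [hm z, hm' z, huu', ht]
  -- centres distinct
  have haneb : a ≠ b := by
    intro h
    apply hab
    have : rA = rB := by rw [← ha1, ← hb1, h]
    rw [h, this]
  have hanex : a ≠ x := by
    intro h
    apply hxa
    have : rA = rX := by rw [← ha1, ← hx1, h]
    rw [← h, this]
  have hw : a - b ≠ 0 := sub_ne_zero.2 haneb
  have hv : a - x ≠ 0 := sub_ne_zero.2 hanex
  -- inner products with w = a - b
  have hfw : ∀ (u : E2) (t : ℝ), ⟪u, a⟫ - t = rA → (⟪u, b⟫ - t = rB ∨ ⟪u, b⟫ - t = -rB) →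
      (⟪u, a - b⟫ = rA - rB ∨ ⟪u, a - b⟫ = rA + rB) := by
    intro u t hA hB
    rw [inner_sub_right]
    rcases hB with h | h
    · left; linarith
    · right; linarith
  have hfv : ∀ (u : E2) (t : ℝ), ⟪u, a⟫ - t = rA → (⟪u, x⟫ - t = rX ∨ ⟪u, x⟫ - t = -rX) →
      (⟪u, a - x⟫ = rA - rX ∨ ⟪u, a - x⟫ = rA + rX) := by
    intro u t hA hX
    rw [inner_sub_right]
    rcases hX with h | h
    · left; linarith
    · right; linarith
  have hpq : rA - rB ≠ rA + rB := by intro h; linarith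
  have hpq' : rA - rX ≠ rA + rX := by intro h; linarith
  have hne12 : u1 ≠ u2 := key u1 u2 t1 t2 L1 L2 hm1 hm2 hA1 hA2 h12
  have hne13 : u1 ≠ u3 := key u1 u3 t1 t3 L1 L3 hm1 hm3 hA1 hA3 h13
  have hne14 : u1 ≠ u4 := key u1 u4 t1 t4 L1 L4 hm1 hm4 hA1 hA4 h14
  have hne23 : u2 ≠ u3 := key u2 u3 t2 t3 L2 L3 hm2 hm3 hA2 hA3 h23
  have hne24 : u2 ≠ u4 := key u2 u4 t2 t4 L2 L4 hm2 hm4 hA2 hA4 h24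
  have hne34 : u3 ≠ u4 := key u3 u4 t3 t4 L3 L4 hm3 hm4 hA3 hA4 h34
  -- apply the combinatorial lemma for w := a - b
  obtain ⟨hSw, hSwp⟩ := comb hpq
    (hfw u1 t1 hA1 hB1) (hfw u2 t2 hA2 hB2) (hfw u3 t3 hA3 hB3) (hfw u4 t4 hA4 hB4)
    (fun h => pairH hw hne12 hu1 hu2 h) (fun h => pairH hw hne13 hu1 hu3 h)
    (fun h => pairH hw hne14 hu1 hu4 h) (fun h => pairH hw hne23 hu2 hu3 h)
    (fun h => pairH hw hne24 hu2 hu4 h) (fun h => pairH hw hne34 hu3 hu4 h)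
  -- apply the combinatorial lemma for v := a - x
  obtain ⟨hSv, hSvp⟩ := comb hpq'
    (hfv u1 t1 hA1 hX1) (hfv u2 t2 hA2 hX2) (hfv u3 t3 hA3 hX3) (hfv u4 t4 hA4 hX4)
    (fun h => pairH hv hne12 hu1 hu2 h) (fun h => pairH hv hne13 hu1 hu3 h)
    (fun h => pairH hv hne14 hu1 hu4 h) (fun h => pairH hv hne23 hu2 hu3 h)
    (fun h => pairH hv hne24 hu2 hu4 h) (fun h => pairH hv hne34 hu3 hu4 h)
  set S : E2 := u1 + u2 + u3 + u4 with hS_def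
  have hSw' : ⟪S, a - b⟫ = 4 * rA := by
    rw [hS_def, inner_add_left, inner_add_left, inner_add_left]; linarith
  have hSwp' : ⟪S, perp (a - b)⟫ = 0 := by
    rw [hS_def, inner_add_left, inner_add_left, inner_add_left]; linarith
  have hSv' : ⟪S, a - x⟫ = 4 * rA := by
    rw [hS_def, inner_add_left, inner_add_left, inner_add_left]; linarith
  have hSvp' : ⟪S, perp (a - x)⟫ = 0 := by
    rw [hS_def, inner_add_left, inner_add_left, inner_add_left]; linarith
  have hSne : S ≠ 0 := by
    intro h
    rw [h, inner_zero_left] at hSw'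
    linarith
  -- v is parallel to w
  have hperp : ⟪perp (a - x), perp (perp (a - b))⟫ = 0 := perp_lemma hSwp' hSvp' hSne
  rw [perp_perp, inner_neg_right, neg_eq_zero, ← neg_eq_zero, ← inner_perp_comm] at hperp
  obtain ⟨c, hc⟩ := parallel_lemma hperp hw
  have hc1 : c = 1 := by
    have h1 : ⟪S, a - x⟫ = c * ⟪S, a - b⟫ := by rw [hc, real_inner_smul_right]
    rw [hSw', hSv'] at h1
    have : 4 * rA * (c - 1) = 0 := by linarith
    rcases mul_eq_zero.1 this with h | h
    · linarith
    · linarith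
  rw [hc1, one_smul] at hc
  have hxb' : x = b := sub_right_injective hc
  apply hxb
  have : rX = rB := by rw [← hx1, ← hb1, hxb']
  rw [hxb', this]

end FourTangents

/-- Four distinct common tangent lines determine the two circles: if two pairs of
distinct circles have the same set of common tangents, and this set has exactly four
elements, then the pairs of circles coincide. -/
theorem four_common_tangents_determine_circles
    (c₁ c₂ d₁ d₂ : E2) (r₁ r₂ ρ₁ ρ₂ : ℝ)
    (hr₁ : 0 < r₁) (hr₂ : 0 < r₂) (hρ₁ : 0 < ρ₁) (hρ₂ : 0 < ρ₂)
    (hc : (c₁, r₁) ≠ (c₂, r₂)) (hd : (d₁, ρ₁) ≠ (d₂, ρ₂))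
    (hfin : {L : AffineSubspace ℝ E2 | IsLine L ∧ Tangent c₁ r₁ L ∧ Tangent c₂ r₂ L}.Finite)
    (hcard : {L : AffineSubspace ℝ E2 | IsLine L ∧ Tangent c₁ r₁ L ∧ Tangent c₂ r₂ L}.ncard = 4)
    (heq : {L : AffineSubspace ℝ E2 | IsLine L ∧ Tangent c₁ r₁ L ∧ Tangent c₂ r₂ L} =
      {L : AffineSubspace ℝ E2 | IsLine L ∧ Tangent d₁ ρ₁ L ∧ Tangent d₂ ρ₂ L}) :
    ({(c₁, r₁), (c₂, r₂)} : Set (E2 × ℝ)) = ({(d₁, ρ₁), (d₂, ρ₂)} : Set (E2 × ℝ)) := by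
  have ht1 : ∀ L ∈ {L : AffineSubspace ℝ E2 | IsLine L ∧ Tangent c₁ r₁ L ∧ Tangent c₂ r₂ L},
      Tangent d₁ ρ₁ L := by
    intro L hL
    rw [heq] at hL
    exact hL.2.1
  have ht2 : ∀ L ∈ {L : AffineSubspace ℝ E2 | IsLine L ∧ Tangent c₁ r₁ L ∧ Tangent c₂ r₂ L},
      Tangent d₂ ρ₂ L := by
    intro L hL
    rw [heq] at hL
    exact hL.2.2
  have h1 := FourTangents.main_lemma hr₁ hr₂ hρ₁ hc hfin hcard ht1
  have h2 := FourTangents.main_lemma hr₁ hr₂ hρ₂ hc hfin hcard ht2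
  rcases h1 with h1 | h1 <;> rcases h2 with h2 | h2
  · exact absurd (h1.trans h2.symm) hd
  · rw [← h1, ← h2]
  · rw [← h1, ← h2]
    exact Set.pair_comm _ _
  · exact absurd (h1.trans h2.symm) hd

end
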